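/- On U = {x ∈ ℝ³ : 1 + x₁x₂ ≠ 0}, define H(x) = (1/(1+x₁x₂))·(1 + x₁x₂, x₂ + x₁², x₁x₂), and σ₁(x) = x₀ − x₂, σ₂(x) = x₂/x₁ (assume additionally x₁ ≠ 0). Then X_H(σ₁)(x) = 1/(1+x₁x₂) and X_H(σ₂)(x) = −σ₂(x)²/(1+x₁x₂); consequently (1+x₁x₂)·X_H(σ₁) = 1 and (1+x₁x₂)·X_H(σ₂) = −σ₂², exhibiting an orbital reduction of ẋ = H(x) to the planar system ż₁ = 1, ż₂ = −z₂². -/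

import Mathlib

noncomputable def lieDeriv {n : ℕ} (f : (Fin n → ℝ) → (Fin n → ℝ))
    (φ : (Fin n → ℝ) → ℝ) : (Fin n → ℝ) → ℝ :=
  fun x => fderiv ℝ φ x (f x)

lemma proj_hasFDerivAt {n : ℕ} (i : Fin n) (x : Fin n → ℝ) :
    HasFDerivAt (fun x : Fin n → ℝ => x i)
      (ContinuousLinearMap.proj i : (Fin n → ℝ) →L[ℝ] ℝ) x :=
  (ContinuousLinearMap.proj i : (Fin n → ℝ) →L[ℝ] ℝ).hasFDerivAt

lemma fd1 (x v : Fin 3 → ℝ) :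
    fderiv ℝ (fun x : Fin 3 → ℝ => x 0 - x 2) x v = v 0 - v 2 := by
  rw [HasFDerivAt.fderiv (f := fun x : Fin 3 → ℝ => x 0 - x 2) ((proj_hasFDerivAt 0 x).sub (proj_hasFDerivAt 2 x))]
  simp

lemma fd2 (x v : Fin 3 → ℝ) (h : x 1 ≠ 0) :
    fderiv ℝ (fun x : Fin 3 → ℝ => x 2 / x 1) x v
      = (v 2 * x 1 - x 2 * v 1) / (x 1)^2 := by
  have hinv := (hasDerivAt_inv h).comp_hasFDerivAt x (proj_hasFDerivAt 1 x)
  simp only [Function.comp_def] at hinv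
  have hd := HasFDerivAt.fderiv (f := fun x : Fin 3 → ℝ => x 2 * (x 1)⁻¹) ((proj_hasFDerivAt 2 x).mul hinv)
  simp only [div_eq_mul_inv]
  rw [hd]
  simp only [ContinuousLinearMap.add_apply, ContinuousLinearMap.coe_smul', Pi.smul_apply,
    ContinuousLinearMap.coe_comp', Function.comp_apply, ContinuousLinearMap.proj_apply,
    ContinuousLinearMap.smulRight_apply, ContinuousLinearMap.one_apply, smul_eq_mul]
  field_simp
  ring

theorem stmt16 :
    ∀ x : Fin 3 → ℝ, 1 + x 1 * x 2 ≠ 0 → x 1 ≠ 0 →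
      (lieDeriv
          (fun x : Fin 3 → ℝ =>
            (1 + x 1 * x 2)⁻¹ • ![1 + x 1 * x 2, x 2 + (x 1)^2, x 1 * x 2])
          (fun x : Fin 3 → ℝ => x 0 - x 2) x = 1 / (1 + x 1 * x 2)) ∧
      (lieDeriv
          (fun x : Fin 3 → ℝ =>
            (1 + x 1 * x 2)⁻¹ • ![1 + x 1 * x 2, x 2 + (x 1)^2, x 1 * x 2])
          (fun x : Fin 3 → ℝ => x 2 / x 1) x
        = -(x 2 / x 1)^2 / (1 + x 1 * x 2)) ∧
      ((1 + x 1 * x 2) * lieDeriv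
          (fun x : Fin 3 → ℝ =>
            (1 + x 1 * x 2)⁻¹ • ![1 + x 1 * x 2, x 2 + (x 1)^2, x 1 * x 2])
          (fun x : Fin 3 → ℝ => x 0 - x 2) x = 1) ∧
      ((1 + x 1 * x 2) * lieDeriv
          (fun x : Fin 3 → ℝ =>
            (1 + x 1 * x 2)⁻¹ • ![1 + x 1 * x 2, x 2 + (x 1)^2, x 1 * x 2])
          (fun x : Fin 3 → ℝ => x 2 / x 1) x = -(x 2 / x 1)^2) := by
  intro x hμ h1
  have e1 : lieDeriv
          (fun x : Fin 3 → ℝ =>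
            (1 + x 1 * x 2)⁻¹ • ![1 + x 1 * x 2, x 2 + (x 1)^2, x 1 * x 2])
          (fun x : Fin 3 → ℝ => x 0 - x 2) x = 1 / (1 + x 1 * x 2) := by
    rw [lieDeriv, fd1]
    simp only [Pi.smul_apply, Matrix.cons_val_zero, Matrix.cons_val_two, Matrix.tail_cons,
      Matrix.head_cons, smul_eq_mul]
    field_simp
    ring
  have e2 : lieDeriv
          (fun x : Fin 3 → ℝ =>
            (1 + x 1 * x 2)⁻¹ • ![1 + x 1 * x 2, x 2 + (x 1)^2, x 1 * x 2])
          (fun x : Fin 3 → ℝ => x 2 / x 1) x = -(x 2 / x 1)^2 / (1 + x 1 * x 2) := by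
    rw [lieDeriv, fd2 _ _ h1]
    simp only [Pi.smul_apply, Matrix.cons_val_one, Matrix.cons_val_two, Matrix.tail_cons,
      Matrix.head_cons, smul_eq_mul, Matrix.cons_val_zero]
    field_simp
    ring
  refine ⟨e1, e2, ?_, ?_⟩
  · rw [e1]; field_simp
  · rw [e2]; field_simp
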